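/- arXiv:2408.05260 — 4 statements merged into one kernel-verified Lean document; each statement's English description precedes it below -/
import Mathlib

section
/- Let D = (L, μ) be a quantum code of type (N, M) with unitary U : M ⊗ F → L, let P : M → M be a unitary with associated unitary channel 𝒫(X) = P X P*, and let R : L(L) → L(L) be a quantum channel satisfying μ* ∘ R = 𝒫 ∘ μ*. Then there exists a quantum channel 𝓕 : L(F) → L(F) such that U* R(U X U*) U = (𝒫 ⊗ 𝓕)(X) for all X ∈ L(M ⊗ F); that is, conjugating R by the code unitary yields the tensor product of the logical unitary channel 𝒫 with a channel 𝓕 acting on the syndrome space F. -/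
open scoped ComplexOrder Kronecker
open Matrix

noncomputable section

namespace Paper

/-- The positive semidefinite square root (Mathlib's former `Matrix.PosSemidef.sqrt`). -/
def posSemidefSqrt {n : Type*} [Fintype n] [DecidableEq n] {A : Matrix n n ℂ}
    (hA : A.PosSemidef) : Matrix n n ℂ :=
  hA.1.eigenvectorUnitary.1 * diagonal ((↑) ∘ (√·) ∘ hA.1.eigenvalues) *
    (star hA.1.eigenvectorUnitary : Matrix n n ℂ)

/-- The trace norm `‖A‖₁ = Tr √(AᴴA)` of a complex matrix. -/
def traceNorm {m n : Type*} [Fintype m] [Fintype n] [DecidableEq n]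
    (A : Matrix m n ℂ) : ℝ :=
  ((posSemidefSqrt (Matrix.posSemidef_conjTranspose_mul_self A)).trace).re

/-- The ℓ²→ℓ² operator norm of a matrix. -/
def opNorm {m n : Type*} [Fintype m] [Fintype n] [DecidableEq n] (A : Matrix m n ℂ) : ℝ :=
  ‖LinearMap.toContinuousLinearMap (Matrix.toEuclideanLin A)‖

/-- `X ↦ A * X * Bᴴ` as a linear map on matrices. -/
def sandwich {m n : Type*} [Fintype m] (A B : Matrix n m ℂ) :
    Matrix m m ℂ →ₗ[ℂ] Matrix n n ℂ where
  toFun X := A * X * Bᴴ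
  map_add' X Y := by
    show A * (X + Y) * Bᴴ = A * X * Bᴴ + A * Y * Bᴴ
    rw [Matrix.mul_add, Matrix.add_mul]
  map_smul' c X := by
    show A * (c • X) * Bᴴ = c • (A * X * Bᴴ)
    rw [Matrix.mul_smul, Matrix.smul_mul]

/-- `id_{L(G)} ⊗ T`, acting blockwise. -/
def tensorLeft (G : Type*) {m n : Type*}
    (T : Matrix m m ℂ →ₗ[ℂ] Matrix n n ℂ) :
    Matrix (G × m) (G × m) ℂ →ₗ[ℂ] Matrix (G × n) (G × n) ℂ where
  toFun X := Matrix.of fun p q => T (Matrix.of fun i j => X (p.1, i) (q.1, j)) p.2 q.2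
  map_add' X Y := by
    ext p q
    show T (Matrix.of fun i j => (X + Y) (p.1, i) (q.1, j)) p.2 q.2
        = T (Matrix.of fun i j => X (p.1, i) (q.1, j)) p.2 q.2
          + T (Matrix.of fun i j => Y (p.1, i) (q.1, j)) p.2 q.2
    have h : (Matrix.of fun i j => (X + Y) (p.1, i) (q.1, j))
        = (Matrix.of fun i j => X (p.1, i) (q.1, j))
          + Matrix.of fun i j => Y (p.1, i) (q.1, j) := by
      ext i j; simp
    rw [h, map_add, Matrix.add_apply]
  map_smul' c X := by
    ext p q
    show T (Matrix.of fun i j => (c • X) (p.1, i) (q.1, j)) p.2 q.2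
        = c • T (Matrix.of fun i j => X (p.1, i) (q.1, j)) p.2 q.2
    have h : (Matrix.of fun i j => (c • X) (p.1, i) (q.1, j))
        = c • Matrix.of fun i j => X (p.1, i) (q.1, j) := by
      ext i j; simp
    rw [h, _root_.map_smul, Matrix.smul_apply]

/-- The induced trace norm `‖T‖₁` of a superoperator. -/
def inducedTraceNorm {m n : Type*} [Fintype m] [DecidableEq m] [Fintype n] [DecidableEq n]
    (T : Matrix m m ℂ →ₗ[ℂ] Matrix n n ℂ) : ℝ :=
  sSup {y | ∃ X : Matrix m m ℂ, traceNorm X ≤ 1 ∧ y = traceNorm (T X)}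

/-- The diamond norm `‖T‖◇` of a superoperator. -/
def dnorm {m n : Type*} [Fintype m] [DecidableEq m] [Fintype n] [DecidableEq n]
    (T : Matrix m m ℂ →ₗ[ℂ] Matrix n n ℂ) : ℝ :=
  sSup {y | ∃ k : ℕ, y = inducedTraceNorm (tensorLeft (Fin k) T)}

/-- Complete positivity of a superoperator. -/
def IsCP {m n : Type*} [Fintype m] [Fintype n]
    (T : Matrix m m ℂ →ₗ[ℂ] Matrix n n ℂ) : Prop :=
  ∀ (k : ℕ) (X : Matrix (Fin k × m) (Fin k × m) ℂ),
    X.PosSemidef → (tensorLeft (Fin k) T X).PosSemidef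

/-- Quantum channel: completely positive and trace preserving. -/
def IsChannel {m n : Type*} [Fintype m] [Fintype n]
    (T : Matrix m m ℂ →ₗ[ℂ] Matrix n n ℂ) : Prop :=
  IsCP T ∧ ∀ X : Matrix m m ℂ, (T X).trace = X.trace

/-- Density operator: positive semidefinite with trace 1. -/
def IsDensity {m : Type*} [Fintype m] (ρ : Matrix m m ℂ) : Prop :=
  ρ.PosSemidef ∧ ρ.trace = 1

/-- Partial trace over the second tensor factor. -/
def ptraceRight (a b : Type*) [Fintype b] :
    Matrix (a × b) (a × b) ℂ →ₗ[ℂ] Matrix a a ℂ where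
  toFun X := Matrix.of fun i j => ∑ k : b, X (i, k) (j, k)
  map_add' X Y := by ext i j; simp [Finset.sum_add_distrib]
  map_smul' c X := by ext i j; simp [Finset.mul_sum]

/-- Tensor product of superoperators. -/
def tensorSuperop {a b a' b' : Type*} [Fintype a] [DecidableEq a] [Fintype b] [DecidableEq b]
    (T : Matrix a a ℂ →ₗ[ℂ] Matrix a' a' ℂ) (S : Matrix b b ℂ →ₗ[ℂ] Matrix b' b' ℂ) :
    Matrix (a × b) (a × b) ℂ →ₗ[ℂ] Matrix (a' × b') (a' × b') ℂ where
  toFun X := Matrix.of fun p q =>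
    ∑ i : a, ∑ j : a, ∑ k : b, ∑ l : b,
      X (i, k) (j, l) * T (Matrix.single i j 1) p.1 q.1
        * S (Matrix.single k l 1) p.2 q.2
  map_add' X Y := by
    ext p q
    simp [add_mul, Finset.sum_add_distrib]
  map_smul' c X := by
    ext p q
    simp [Finset.mul_sum, mul_assoc]

/-- Tensor product of a family of superoperators. -/
def piTensorSuperop {ι : Type*} [Fintype ι] [DecidableEq ι] {α β : ι → Type*}
    [∀ i, Fintype (α i)] [∀ i, DecidableEq (α i)]
    (T : ∀ i, Matrix (α i) (α i) ℂ →ₗ[ℂ] Matrix (β i) (β i) ℂ) :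
    Matrix (∀ i, α i) (∀ i, α i) ℂ →ₗ[ℂ] Matrix (∀ i, β i) (∀ i, β i) ℂ where
  toFun X := Matrix.of fun p q =>
    ∑ x : ∀ i, α i, ∑ y : ∀ i, α i,
      X x y * ∏ i, T i (Matrix.single (x i) (y i) 1) (p i) (q i)
  map_add' X Y := by
    ext p q
    simp [add_mul, Finset.sum_add_distrib]
  map_smul' c X := by
    ext p q
    simp [Finset.mul_sum, mul_assoc]

/-- A (many-to-one) quantum code of type `(N, M)` with syndrome space `F` and
code subspace `L ⊆ N`, given by the isometric embedding `J : L → N` and the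
code unitary `U : M ⊗ F → L`. -/
structure Code (N M F L : Type*) [Fintype N] [Fintype M] [Fintype F] [Fintype L]
    [DecidableEq M] [DecidableEq F] [DecidableEq L] where
  J : Matrix N L ℂ
  J_isometry : Jᴴ * J = 1
  U : Matrix L (M × F) ℂ
  U_unitary_left : Uᴴ * U = 1
  U_unitary_right : U * Uᴴ = 1

variable {N M F L : Type*} [Fintype N] [Fintype M] [Fintype F] [Fintype L]
  [DecidableEq M] [DecidableEq F] [DecidableEq L]

/-- The embedding channel `𝒥(ρ) = J ρ J*`. -/
def Code.embed (D : Code N M F L) : Matrix L L ℂ →ₗ[ℂ] Matrix N N ℂ :=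
  sandwich D.J D.J

/-- The ideal decoder `μ*(ρ) = Tr_F (U* ρ U)`. -/
def Code.decode (D : Code N M F L) : Matrix L L ℂ →ₗ[ℂ] Matrix M M ℂ :=
  ptraceRight M F ∘ₗ sandwich D.Uᴴ D.Uᴴ


section ChannelAux

variable {m n p G ι : Type*}

lemma sandwich_apply [Fintype m] (A B : Matrix n m ℂ) (X : Matrix m m ℂ) :
    sandwich A B X = A * X * Bᴴ := rfl

lemma sandwich_comp [Fintype m] [Fintype n] (A B : Matrix p n ℂ) (C D : Matrix n m ℂ) :
    sandwich A B ∘ₗ sandwich C D = sandwich (A * C) (B * D) := by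
  apply LinearMap.ext; intro X
  simp [sandwich_apply, Matrix.conjTranspose_mul, Matrix.mul_assoc]

lemma sandwich_one [Fintype m] [DecidableEq m] :
    sandwich (1 : Matrix m m ℂ) 1 = LinearMap.id := by
  apply LinearMap.ext; intro X
  simp [sandwich_apply]

lemma tensorLeft_apply (T : Matrix m m ℂ →ₗ[ℂ] Matrix n n ℂ)
    (X : Matrix (G × m) (G × m) ℂ) (p q : G × n) :
    tensorLeft G T X p q = T (Matrix.of fun i j => X (p.1, i) (q.1, j)) p.2 q.2 := rfl

lemma tensorLeft_comp {n' : Type*} (T : Matrix n n ℂ →ₗ[ℂ] Matrix n' n' ℂ)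
    (S : Matrix m m ℂ →ₗ[ℂ] Matrix n n ℂ) :
    tensorLeft G (T ∘ₗ S) = tensorLeft G T ∘ₗ tensorLeft G S := by
  apply LinearMap.ext; intro X
  ext p q
  show T (S _) p.2 q.2 = T _ p.2 q.2
  congr 1

lemma tensorLeft_sum (s : Finset ι) (T : ι → (Matrix m m ℂ →ₗ[ℂ] Matrix n n ℂ)) :
    tensorLeft G (∑ i ∈ s, T i) = ∑ i ∈ s, tensorLeft G (T i) := by
  apply LinearMap.ext; intro X
  ext p q
  rw [LinearMap.sum_apply, Matrix.sum_apply]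
  show (∑ i ∈ s, T i) _ p.2 q.2 = _
  rw [LinearMap.sum_apply, Matrix.sum_apply]
  exact Finset.sum_congr rfl fun i _ => rfl

lemma tensorLeft_sandwich [Fintype G] [DecidableEq G] [Fintype m]
    (A B : Matrix n m ℂ) :
    tensorLeft G (sandwich A B)
      = sandwich ((1 : Matrix G G ℂ) ⊗ₖ A) ((1 : Matrix G G ℂ) ⊗ₖ B) := by
  apply LinearMap.ext; intro X
  ext p q
  show (A * (Matrix.of fun i j => X (p.1, i) (q.1, j)) * Bᴴ) p.2 q.2 = _
  simp only [sandwich_apply, Matrix.mul_apply, Matrix.conjTranspose_apply,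
    Matrix.kroneckerMap_apply, Matrix.of_apply, Fintype.sum_prod_type,
    Matrix.one_apply, ite_mul, one_mul, zero_mul, mul_ite, mul_one, mul_zero,
    star_one, star_zero, Finset.sum_ite_eq, Finset.sum_ite_eq',
    Finset.mem_univ, if_true]
  simp only [apply_ite (star : ℂ → ℂ), star_zero, mul_ite, mul_zero, ite_mul, zero_mul,
    Finset.sum_ite_eq, Finset.sum_ite_eq', Finset.mem_univ, if_true,
    Finset.sum_ite_irrel, Finset.sum_const_zero]

end ChannelAux

section KrausAux

variable {m n p G ι : Type*}

lemma posSemidef_sum [Fintype m] {s : Finset ι} (f : ι → Matrix m m ℂ)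
    (h : ∀ i ∈ s, (f i).PosSemidef) : (∑ i ∈ s, f i).PosSemidef := by
  classical
  induction s using Finset.induction_on with
  | empty => simpa using Matrix.PosSemidef.zero
  | insert x s hx ih =>
      rw [Finset.sum_insert hx]
      exact ((h _ (Finset.mem_insert_self _ _)).add
        (ih fun i hi => h i (Finset.mem_insert_of_mem hi)))

/-- The Kraus-form superoperator `X ↦ ∑ i, K i * X * (K i)ᴴ`. -/
def krausMap [Fintype ι] [Fintype m] (K : ι → Matrix n m ℂ) :
    Matrix m m ℂ →ₗ[ℂ] Matrix n n ℂ := ∑ i, sandwich (K i) (K i)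

lemma krausMap_apply [Fintype ι] [Fintype m] (K : ι → Matrix n m ℂ) (X : Matrix m m ℂ) :
    krausMap K X = ∑ i, K i * X * (K i)ᴴ := by
  simp [krausMap, sandwich_apply]

lemma isCP_krausMap [Fintype ι] [Fintype m] [Fintype n] (K : ι → Matrix n m ℂ) :
    IsCP (krausMap K) := by
  intro k X hX
  rw [krausMap, tensorLeft_sum]
  have : ∀ i : ι, tensorLeft (Fin k) (sandwich (K i) (K i))
      = sandwich ((1 : Matrix (Fin k) (Fin k) ℂ) ⊗ₖ K i) ((1 : Matrix (Fin k) (Fin k) ℂ) ⊗ₖ K i) :=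
    fun i => tensorLeft_sandwich _ _
  rw [LinearMap.sum_apply]
  refine posSemidef_sum _ fun i _ => ?_
  rw [this i, sandwich_apply]
  exact hX.mul_mul_conjTranspose_same _

lemma isCP_sandwich [Fintype m] [Fintype n] (A : Matrix n m ℂ) :
    IsCP (sandwich A A) := by
  intro k X hX
  rw [tensorLeft_sandwich, sandwich_apply]
  exact hX.mul_mul_conjTranspose_same _

lemma trace_sandwich [Fintype m] [Fintype n] (A B : Matrix n m ℂ) (X : Matrix m m ℂ) :
    (sandwich A B X).trace = (Bᴴ * A * X).trace := by
  rw [sandwich_apply, Matrix.trace_mul_cycle]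

lemma isChannel_sandwich [Fintype m] [DecidableEq m] [Fintype n] (A : Matrix n m ℂ) (h : Aᴴ * A = 1) :
    IsChannel (sandwich A A) := by
  refine ⟨isCP_sandwich A, fun X => ?_⟩
  rw [trace_sandwich, h, Matrix.one_mul]

lemma isChannel_comp {n' : Type*} [Fintype m] [Fintype n] [Fintype n']
    {T : Matrix n n ℂ →ₗ[ℂ] Matrix n' n' ℂ} {S : Matrix m m ℂ →ₗ[ℂ] Matrix n n ℂ}
    (hT : IsChannel T) (hS : IsChannel S) : IsChannel (T ∘ₗ S) := by
  refine ⟨fun k X hX => ?_, fun X => ?_⟩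
  · rw [tensorLeft_comp]
    exact hT.1 k _ (hS.1 k X hX)
  · simp only [LinearMap.comp_apply, hT.2, hS.2]

lemma trace_krausMap_eq [Fintype ι] [Fintype m] [Fintype n] [DecidableEq m]
    (K : ι → Matrix n m ℂ) (X : Matrix m m ℂ) :
    (krausMap K X).trace = ((∑ i, (K i)ᴴ * K i) * X).trace := by
  rw [krausMap_apply, Matrix.trace_sum, Finset.sum_mul, Matrix.trace_sum]
  exact Finset.sum_congr rfl fun i _ => by
    rw [← sandwich_apply, trace_sandwich]

lemma isChannel_krausMap [Fintype ι] [Fintype m] [Fintype n] [DecidableEq m]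
    (K : ι → Matrix n m ℂ) (h : ∑ i, (K i)ᴴ * K i = 1) :
    IsChannel (krausMap K) := by
  refine ⟨isCP_krausMap K, fun X => ?_⟩
  rw [trace_krausMap_eq, h, Matrix.one_mul]

lemma krausMap_tp_sum [Fintype ι] [Fintype m] [Fintype n] [DecidableEq m]
    (K : ι → Matrix n m ℂ) (h : ∀ X : Matrix m m ℂ, (krausMap K X).trace = X.trace) :
    ∑ i, (K i)ᴴ * K i = 1 := by
  ext a b
  have := h (Matrix.single b a 1)
  rw [trace_krausMap_eq] at this
  simpa [Matrix.trace, Matrix.diag, Matrix.mul_apply, Matrix.single, Matrix.one_apply,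
    ite_and, eq_comm] using this

end KrausAux

section ChoiKraus

variable {d : Type*} [Fintype d] [DecidableEq d]

lemma map_matrix_expand {n : Type*} (T : Matrix d d ℂ →ₗ[ℂ] Matrix n n ℂ) (X : Matrix d d ℂ) :
    T X = ∑ a : d, ∑ b : d, X a b • T (Matrix.single a b 1) := by
  conv_lhs => rw [Matrix.matrix_eq_sum_single X]
  rw [map_sum]
  refine Finset.sum_congr rfl fun a _ => ?_
  rw [map_sum]
  refine Finset.sum_congr rfl fun b _ => ?_
  rw [← _root_.map_smul]
  congr 1
  rw [Matrix.smul_single, smul_eq_mul, mul_one]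

/-- Choi–Kraus: a completely positive superoperator has a Kraus decomposition. -/
lemma exists_kraus (T : Matrix d d ℂ →ₗ[ℂ] Matrix d d ℂ) (hT : IsCP T) :
    ∃ K : d × d → Matrix d d ℂ, T = krausMap K := by
  classical
  set k := Fintype.card d with hk
  set e : Fin k ≃ d := (Fintype.equivFin d).symm with he
  set w : Matrix Unit (Fin k × d) ℂ := Matrix.of fun _ p => if e p.1 = p.2 then 1 else 0 with hw
  have hΩ : (wᴴ * w).PosSemidef := Matrix.posSemidef_conjTranspose_mul_self w
  have hC0 : (tensorLeft (Fin k) T (wᴴ * w)).PosSemidef := hT k _ hΩ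
  set C : Matrix (d × d) (d × d) ℂ :=
    (tensorLeft (Fin k) T (wᴴ * w)).submatrix (fun p => (e.symm p.1, p.2))
      (fun p => (e.symm p.1, p.2)) with hCdef
  have hC : C.PosSemidef := hC0.submatrix _
  have hCentry : ∀ a b p q, C (a, p) (b, q) = T (Matrix.single a b 1) p q := by
    intro a b p q
    show tensorLeft (Fin k) T (wᴴ * w) ((e.symm a, p)) ((e.symm b, q)) = _
    rw [tensorLeft_apply]
    have hblock : (Matrix.of fun i j => (wᴴ * w) (((e.symm a : Fin k), p).1, i)
        (((e.symm b : Fin k), q).1, j)) = Matrix.single a b (1 : ℂ) := by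
      ext i j
      simp only [Matrix.of_apply, Matrix.mul_apply, Matrix.conjTranspose_apply, hw,
      Finset.univ_unique, Finset.sum_singleton, Matrix.of_apply, Equiv.apply_symm_apply,
      Matrix.single, apply_ite (star : ℂ → ℂ), star_one, star_zero]
      by_cases h1 : a = i <;> by_cases h2 : b = j <;> simp [h1, h2]
    rw [hblock]
  obtain ⟨B, hB0⟩ : ∃ B : Matrix (d × d) (d × d) ℂ, C = star B * B := by
    open scoped MatrixOrder in
    exact CStarAlgebra.nonneg_iff_eq_star_mul_self.mp hC.nonneg
  have hBB : Bᴴ * B = C := hB0.symm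
  refine ⟨fun x => Matrix.of fun p a => star (B x (a, p)), ?_⟩
  apply LinearMap.ext; intro X
  ext p q
  rw [map_matrix_expand T X, krausMap_apply]
  have hCB : ∀ a b, C (a, p) (b, q) = ∑ x : d × d, star (B x (a, p)) * B x (b, q) := by
    intro a b
    rw [← hBB]
    simp [Matrix.mul_apply, Matrix.conjTranspose_apply]
  calc (∑ a : d, ∑ b : d, X a b • T (Matrix.single a b 1)) p q
      = ∑ a : d, ∑ b : d, X a b * C (a, p) (b, q) := by
        rw [Matrix.sum_apply]
        refine Finset.sum_congr rfl fun a _ => ?_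
        rw [Matrix.sum_apply]
        exact Finset.sum_congr rfl fun b _ => by rw [hCentry, Matrix.smul_apply, smul_eq_mul]
    _ = ∑ a : d, ∑ x : d × d, ∑ b : d,
          X a b * (star (B x (a, p)) * B x (b, q)) := by
        refine Finset.sum_congr rfl fun a _ => ?_
        simp_rw [hCB, Finset.mul_sum]
        exact Finset.sum_comm
    _ = ∑ x : d × d, ∑ a : d, ∑ b : d,
          X a b * (star (B x (a, p)) * B x (b, q)) := Finset.sum_comm
    _ = ∑ x : d × d,
          ((Matrix.of fun p a => star (B x (a, p))) * X
            * (Matrix.of fun p a => star (B x (a, p)))ᴴ) p q := by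
        refine Finset.sum_congr rfl fun x _ => ?_
        simp only [Matrix.mul_apply, Matrix.conjTranspose_apply, Matrix.of_apply,
          star_star, Finset.sum_mul, Finset.mul_sum]
        rw [Finset.sum_comm]
        refine Finset.sum_congr rfl fun a _ => Finset.sum_congr rfl fun b _ => ?_
        ring
    _ = (∑ x : d × d,
          (Matrix.of fun p a => star (B x (a, p))) * X
            * (Matrix.of fun p a => star (B x (a, p)))ᴴ) p q := by
        rw [Matrix.sum_apply]

end ChoiKraus

section IdentityChannel

lemma sum_mul_star_self_eq_zero {ι : Type*} {s : Finset ι} {f : ι → ℂ}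
    (h : ∑ i ∈ s, f i * star (f i) = 0) : ∀ i ∈ s, f i = 0 := by
  have e1 : ∀ i, f i * star (f i) = (Complex.normSq (f i) : ℂ) := fun i => Complex.mul_conj (f i)
  have h' : ∑ i ∈ s, Complex.normSq (f i) = 0 := by
    have h2 : ((∑ i ∈ s, Complex.normSq (f i) : ℝ) : ℂ) = 0 := by
      push_cast
      rw [← h]
      exact (Finset.sum_congr rfl fun i _ => (e1 i).symm)
    exact_mod_cast h2
  intro i hi
  exact Complex.normSq_eq_zero.mp
    ((Finset.sum_eq_zero_iff_of_nonneg (fun j _ => Complex.normSq_nonneg (f j))).mp h' i hi)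

lemma kraus_identity_scalar {ι M' : Type*} [Fintype ι] [Fintype M'] [DecidableEq M']
    (A : ι → Matrix M' M' ℂ)
    (h : ∀ ρ : Matrix M' M' ℂ, ∑ i : ι, A i * ρ * (A i)ᴴ = ρ) :
    ∀ (i : ι) (m n m' : M'), A i m n = if m = n then A i m' m' else 0 := by
  have entry : ∀ (ρ : Matrix M' M' ℂ) (m n : M'),
      ∑ i : ι, (A i * ρ * (A i)ᴴ) m n = ρ m n := by
    intro ρ m n
    have := congrFun (congrFun (h ρ) m) n
    rw [← this, Matrix.sum_apply]
  have hoff : ∀ (i : ι) (m j : M'), m ≠ j → A i m j = 0 := by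
    intro i m j hmj
    have hval := entry (Matrix.single j j 1) m m
    simp only [Matrix.mul_apply, Matrix.single, Matrix.conjTranspose_apply,
      Matrix.of_apply, ite_and, ite_mul, zero_mul, mul_ite, mul_zero,
      Finset.sum_ite_eq, Finset.sum_ite_eq', Finset.mem_univ, if_true,
      Finset.sum_ite_irrel, Finset.sum_const_zero, one_mul] at hval
    rw [if_neg (Ne.symm hmj)] at hval
    simp only [mul_one] at hval
    exact sum_mul_star_self_eq_zero hval i (Finset.mem_univ i)
  have hdiagrel : ∀ j l : M', ∑ i : ι, A i j j * star (A i l l) = 1 := by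
    intro j l
    have hval := entry (Matrix.single j l 1) j l
    simp only [Matrix.mul_apply, Matrix.single, Matrix.conjTranspose_apply,
      Matrix.of_apply, ite_and, ite_mul, zero_mul, mul_ite, mul_zero,
      Finset.sum_ite_eq, Finset.sum_ite_eq', Finset.mem_univ, if_true,
      Finset.sum_ite_irrel, Finset.sum_const_zero, one_mul, if_pos rfl] at hval
    simp only [mul_one] at hval
    exact hval
  have hdiag : ∀ (i : ι) (j l : M'), A i j j = A i l l := by
    intro i j l
    have hz : ∑ i : ι, (A i j j - A i l l) * star (A i j j - A i l l) = 0 := by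
      simp only [star_sub, mul_sub, sub_mul, Finset.sum_sub_distrib]
      rw [hdiagrel j j, hdiagrel j l, hdiagrel l j, hdiagrel l l]
      ring
    have := sum_mul_star_self_eq_zero hz i (Finset.mem_univ i)
    exact sub_eq_zero.mp this
  intro i m n m'
  by_cases hmn : m = n
  · subst hmn
    simp [hdiag i m m']
  · simp [hmn, hoff i m n hmn]

end IdentityChannel

section TensorSuperopAux

variable {a b a' b' ι : Type*} [Fintype a] [DecidableEq a] [Fintype b] [DecidableEq b]

lemma tensorSuperop_apply [Fintype a'] [Fintype b']
    (T : Matrix a a ℂ →ₗ[ℂ] Matrix a' a' ℂ) (S : Matrix b b ℂ →ₗ[ℂ] Matrix b' b' ℂ)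
    (X : Matrix (a × b) (a × b) ℂ) (p q : a' × b') :
    tensorSuperop T S X p q
      = ∑ i : a, ∑ j : a, ∑ c : b, ∑ l : b,
          X (i, c) (j, l) * T (Matrix.single i j 1) p.1 q.1
            * S (Matrix.single c l 1) p.2 q.2 := rfl

lemma sandwich_stdBasisMatrix [Fintype a] (A B : Matrix a' a ℂ) (i j : a) (p q : a') :
    sandwich A B (Matrix.single i j 1) p q = A p i * star (B q j) := by
  simp only [sandwich_apply, Matrix.mul_apply, Matrix.conjTranspose_apply,
    Matrix.single, Matrix.of_apply, ite_and, ite_mul, zero_mul, mul_ite, mul_zero,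
    Finset.sum_ite_irrel, Finset.sum_const_zero, Finset.sum_ite_eq, Finset.sum_ite_eq',
    Finset.mem_univ, if_true, one_mul, mul_one]

lemma tensorSuperop_add_right [Fintype a'] [Fintype b']
    (T : Matrix a a ℂ →ₗ[ℂ] Matrix a' a' ℂ) (S₁ S₂ : Matrix b b ℂ →ₗ[ℂ] Matrix b' b' ℂ) :
    tensorSuperop T (S₁ + S₂) = tensorSuperop T S₁ + tensorSuperop T S₂ := by
  apply LinearMap.ext; intro X
  ext p q
  simp only [tensorSuperop_apply, LinearMap.add_apply, Matrix.add_apply, mul_add, add_mul,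
    Finset.sum_add_distrib]

lemma tensorSuperop_zero_right [Fintype a'] [Fintype b']
    (T : Matrix a a ℂ →ₗ[ℂ] Matrix a' a' ℂ) :
    tensorSuperop (a := a) (b := b) (a' := a') (b' := b') T 0 = 0 := by
  apply LinearMap.ext; intro X
  ext p q
  simp only [tensorSuperop_apply, LinearMap.zero_apply, Matrix.zero_apply, mul_zero,
    Finset.sum_const_zero]

lemma tensorSuperop_sum_right [Fintype a'] [Fintype b'] (s : Finset ι)
    (T : Matrix a a ℂ →ₗ[ℂ] Matrix a' a' ℂ) (S : ι → (Matrix b b ℂ →ₗ[ℂ] Matrix b' b' ℂ)) :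
    tensorSuperop T (∑ u ∈ s, S u) = ∑ u ∈ s, tensorSuperop T (S u) := by
  classical
  induction s using Finset.induction_on with
  | empty => simpa using tensorSuperop_zero_right T
  | @insert x s hx ih =>
      rw [Finset.sum_insert hx, Finset.sum_insert hx, tensorSuperop_add_right, ih]

lemma tensorSuperop_sandwich_sandwich [Fintype a'] [Fintype b']
    (A B : Matrix a' a ℂ) (C E : Matrix b' b ℂ) :
    tensorSuperop (sandwich A B) (sandwich C E) = sandwich (A ⊗ₖ C) (B ⊗ₖ E) := by
  apply LinearMap.ext; intro X
  ext p q
  rw [sandwich_apply]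
  refine Eq.symm ?_
  calc ((A ⊗ₖ C) * X * (B ⊗ₖ E)ᴴ) p q
      = ∑ y : a × b, ∑ x : a × b, (A ⊗ₖ C) p x * X x y * star ((B ⊗ₖ E) q y) := by
        simp [Matrix.mul_apply, Matrix.conjTranspose_apply, Finset.sum_mul]
    _ = ∑ x : a × b, ∑ y : a × b, (A ⊗ₖ C) p x * X x y * star ((B ⊗ₖ E) q y) :=
        Finset.sum_comm
    _ = ∑ i : a, ∑ c : b, ∑ j : a, ∑ l : b, X (i, c) (j, l)
          * (A p.1 i * star (B q.1 j)) * (C p.2 c * star (E q.2 l)) := by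
        simp only [Fintype.sum_prod_type, Matrix.kroneckerMap_apply, star_mul']
        exact Finset.sum_congr rfl fun i _ => Finset.sum_congr rfl fun c _ =>
          Finset.sum_congr rfl fun j _ => Finset.sum_congr rfl fun l _ => by ring
    _ = ∑ i : a, ∑ j : a, ∑ c : b, ∑ l : b, X (i, c) (j, l)
          * (A p.1 i * star (B q.1 j)) * (C p.2 c * star (E q.2 l)) :=
        Finset.sum_congr rfl fun i _ => Finset.sum_comm
    _ = tensorSuperop (sandwich A B) (sandwich C E) X p q := by
        rw [tensorSuperop_apply]
        exact Finset.sum_congr rfl fun i _ => Finset.sum_congr rfl fun j _ =>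
          Finset.sum_congr rfl fun c _ => Finset.sum_congr rfl fun l _ => by
            rw [sandwich_stdBasisMatrix, sandwich_stdBasisMatrix]

end TensorSuperopAux

section MoreAux

variable {a b a' b' ι : Type*} [Fintype a] [DecidableEq a] [Fintype b] [DecidableEq b]

lemma kron_conjTranspose {α β : Type*} (A : Matrix α a ℂ) (B : Matrix β b ℂ) :
    (A ⊗ₖ B)ᴴ = Aᴴ ⊗ₖ Bᴴ := by
  ext p q
  simp [Matrix.conjTranspose_apply, Matrix.kroneckerMap_apply, star_mul']

lemma tensorSuperop_sandwich_kraus [Fintype a'] [Fintype b'] [Fintype ι]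
    (A : Matrix a' a ℂ) (k : ι → Matrix b' b ℂ) :
    tensorSuperop (sandwich A A) (krausMap k)
      = krausMap (fun x => A ⊗ₖ k x) := by
  rw [krausMap, tensorSuperop_sum_right, krausMap]
  exact Finset.sum_congr rfl fun x _ => tensorSuperop_sandwich_sandwich A A (k x) (k x)

lemma ptraceRight_apply {A B : Type*} [Fintype B] (X : Matrix (A × B) (A × B) ℂ) (i j : A) :
    ptraceRight A B X i j = ∑ f : B, X (i, f) (j, f) := rfl

/-- Conjugation by `A ⊗ 1` commutes with the partial trace. -/
lemma ptraceRight_kron_conj {A B : Matrix a a ℂ} (Y : Matrix (a × b) (a × b) ℂ) :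
    ptraceRight a b ((A ⊗ₖ (1 : Matrix b b ℂ)) * Y * (B ⊗ₖ (1 : Matrix b b ℂ))ᴴ)
      = A * ptraceRight a b Y * Bᴴ := by
  ext i j
  rw [ptraceRight_apply]
  calc ∑ f : b, ((A ⊗ₖ (1 : Matrix b b ℂ)) * Y * (B ⊗ₖ (1 : Matrix b b ℂ))ᴴ) (i, f) (j, f)
      = ∑ f : b, ∑ m : a, ∑ n : a, A i m * Y (m, f) (n, f) * star (B j n) := by
        refine Finset.sum_congr rfl fun f _ => ?_
        simp only [Matrix.mul_apply, Matrix.conjTranspose_apply, Matrix.kroneckerMap_apply,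
          Fintype.sum_prod_type, Matrix.one_apply, apply_ite (star : ℂ → ℂ), star_one,
          star_zero, ite_mul, zero_mul, mul_ite, mul_zero, Finset.sum_ite_irrel,
          Finset.sum_const_zero, Finset.sum_ite_eq, Finset.sum_ite_eq', Finset.mem_univ,
          if_true, mul_one, Finset.sum_mul, Finset.mul_sum]
        exact Finset.sum_comm
    _ = ∑ m : a, ∑ f : b, ∑ n : a, A i m * Y (m, f) (n, f) * star (B j n) :=
        Finset.sum_comm
    _ = ∑ m : a, ∑ n : a, ∑ f : b, A i m * Y (m, f) (n, f) * star (B j n) :=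
        Finset.sum_congr rfl fun m _ => Finset.sum_comm
    _ = ∑ n : a, ∑ m : a, ∑ f : b, A i m * Y (m, f) (n, f) * star (B j n) :=
        Finset.sum_comm
    _ = (A * ptraceRight a b Y * Bᴴ) i j := by
        simp only [Matrix.mul_apply, Matrix.conjTranspose_apply, ptraceRight_apply,
          Finset.sum_mul, Finset.mul_sum]

end MoreAux

section PtraceStructure

variable {M F ι : Type*} [Fintype M] [DecidableEq M] [Fintype F] [DecidableEq F] [Fintype ι]

lemma kraus_ptrace_structure (K : ι → Matrix (M × F) (M × F) ℂ)
    (h : ∀ X : Matrix (M × F) (M × F) ℂ,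
      ptraceRight M F (krausMap K X) = ptraceRight M F X)
    (g : F) (ρ : Matrix M M ℂ) :
    ∑ p : ι × F, (Matrix.of fun m n => K p.1 (m, p.2) (n, g)) * ρ *
      (Matrix.of fun m n => K p.1 (m, p.2) (n, g))ᴴ = ρ := by
  classical
  ext m n
  have h' := congrFun (congrFun (h (ρ ⊗ₖ Matrix.single g g 1)) m) n
  have hL : ptraceRight M F (krausMap K (ρ ⊗ₖ Matrix.single g g 1)) m n
      = ∑ p : ι × F, ((Matrix.of fun m n => K p.1 (m, p.2) (n, g)) * ρ *
          (Matrix.of fun m n => K p.1 (m, p.2) (n, g))ᴴ) m n := by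
    calc ptraceRight M F (krausMap K (ρ ⊗ₖ Matrix.single g g 1)) m n
        = ∑ f : F, ∑ x : ι, ∑ v1 : M, ∑ u1 : M,
            K x (m, f) (u1, g) * ρ u1 v1 * star (K x (n, f) (v1, g)) := by
          rw [ptraceRight_apply]
          refine Finset.sum_congr rfl fun f _ => ?_
          rw [krausMap_apply, Matrix.sum_apply]
          refine Finset.sum_congr rfl fun x _ => ?_
          simp only [Matrix.mul_apply, Matrix.conjTranspose_apply, Matrix.kroneckerMap_apply,
            Matrix.single, Matrix.of_apply, Fintype.sum_prod_type, ite_and, mul_ite,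
            mul_zero, mul_one, ite_mul, zero_mul, one_mul, Finset.sum_ite_irrel,
            Finset.sum_const_zero, Finset.sum_ite_eq, Finset.sum_ite_eq', Finset.mem_univ,
            if_true, Finset.sum_mul, Finset.mul_sum]
      _ = ∑ x : ι, ∑ f : F, ∑ v1 : M, ∑ u1 : M,
            K x (m, f) (u1, g) * ρ u1 v1 * star (K x (n, f) (v1, g)) := Finset.sum_comm
      _ = ∑ p : ι × F, ((Matrix.of fun m n => K p.1 (m, p.2) (n, g)) * ρ *
            (Matrix.of fun m n => K p.1 (m, p.2) (n, g))ᴴ) m n := by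
          rw [Fintype.sum_prod_type]
          refine Finset.sum_congr rfl fun x _ => Finset.sum_congr rfl fun f _ => ?_
          simp only [Matrix.mul_apply, Matrix.conjTranspose_apply, Matrix.of_apply,
            Finset.sum_mul, Finset.mul_sum]
  have hR : ptraceRight M F ((ρ ⊗ₖ Matrix.single g g 1) : Matrix (M × F) (M × F) ℂ) m n
      = ρ m n := by
    rw [ptraceRight_apply]
    simp [Matrix.kroneckerMap_apply, Matrix.single, ite_and, Finset.sum_ite_irrel,
      Finset.sum_const_zero, Finset.sum_ite_eq, Finset.sum_ite_eq']
  rw [hL, hR] at h'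
  rw [Matrix.sum_apply]
  exact h'

end PtraceStructure
/-- Transformation rule for a logical unitary gate: a channel `R` on the code space that
exactly implements the logical unitary channel `𝒫 = P · P*` splits, after conjugation by
the code unitary `U`, as `𝒫 ⊗ 𝓕` for some channel `𝓕` on the syndrome space. -/
theorem unitary_transformation_rule
    {N M F L : Type*} [Fintype N] [Fintype M] [Fintype F] [Fintype L]
    [DecidableEq N] [DecidableEq M] [DecidableEq F] [DecidableEq L]
    (D : Code N M F L) (P : Matrix M M ℂ) (hP : P ∈ Matrix.unitaryGroup M ℂ)
    (R : Matrix L L ℂ →ₗ[ℂ] Matrix L L ℂ) (hR : IsChannel R)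
    (hint : D.decode ∘ₗ R = sandwich P P ∘ₗ D.decode) :
    ∃ Fc : Matrix F F ℂ →ₗ[ℂ] Matrix F F ℂ, IsChannel Fc ∧
      ∀ X : Matrix (M × F) (M × F) ℂ,
        D.Uᴴ * R (D.U * X * D.Uᴴ) * D.U = tensorSuperop (sandwich P P) Fc X := by
  classical
  rcases isEmpty_or_nonempty M with hM | hM
  · refine ⟨LinearMap.id, ⟨fun k X hX => ?_, fun X => rfl⟩, fun X => ?_⟩
    · have : tensorLeft (Fin k) (LinearMap.id : Matrix F F ℂ →ₗ[ℂ] Matrix F F ℂ) X = X := by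
        ext p q; rfl
      rwa [this]
    · ext ⟨i1, i2⟩ j
      exact (IsEmpty.false i1).elim
  · obtain ⟨m0⟩ := hM
    set Q : Matrix (M × F) (M × F) ℂ := P ⊗ₖ (1 : Matrix F F ℂ) with hQdef
    have hQH : Qᴴ = Pᴴ ⊗ₖ (1 : Matrix F F ℂ) := by
      rw [hQdef, kron_conjTranspose, Matrix.conjTranspose_one]
    have hPl : Pᴴ * P = 1 := by
      rw [← Matrix.star_eq_conjTranspose]; exact (Unitary.mem_iff.mp hP).1
    have hPr : P * Pᴴ = 1 := by
      rw [← Matrix.star_eq_conjTranspose]; exact (Unitary.mem_iff.mp hP).2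
    have hQ1 : Qᴴ * Q = 1 := by
      rw [hQH, hQdef, ← Matrix.mul_kronecker_mul, Matrix.one_mul, hPl, Matrix.one_kronecker_one]
    have hQ2 : Q * Qᴴ = 1 := by
      rw [hQH, hQdef, ← Matrix.mul_kronecker_mul, Matrix.one_mul, hPr, Matrix.one_kronecker_one]
    set S' : Matrix (M × F) (M × F) ℂ →ₗ[ℂ] Matrix (M × F) (M × F) ℂ :=
      sandwich Qᴴ Qᴴ ∘ₗ (sandwich D.Uᴴ D.Uᴴ ∘ₗ (R ∘ₗ sandwich D.U D.U)) with hS'def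
    have hS'chan : IsChannel S' := by
      refine isChannel_comp (isChannel_sandwich _ ?_)
        (isChannel_comp (isChannel_sandwich _ ?_) (isChannel_comp hR (isChannel_sandwich _ D.U_unitary_left)))
      · rw [Matrix.conjTranspose_conjTranspose, hQ2]
      · rw [Matrix.conjTranspose_conjTranspose, D.U_unitary_right]
    have hS'apply : ∀ X, S' X = Qᴴ * (D.Uᴴ * R (D.U * X * D.Uᴴ) * D.U) * Q := by
      intro X
      rw [hS'def]
      simp only [LinearMap.comp_apply, sandwich_apply, Matrix.conjTranspose_conjTranspose]
    have hS'pt : ∀ X, ptraceRight M F (S' X) = ptraceRight M F X := by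
      intro X
      have hdec := LinearMap.congr_fun hint (sandwich D.U D.U X)
      have hdec' : ptraceRight M F (D.Uᴴ * R (D.U * X * D.Uᴴ) * D.U)
          = P * D.decode (sandwich D.U D.U X) * Pᴴ := by
        calc ptraceRight M F (D.Uᴴ * R (D.U * X * D.Uᴴ) * D.U)
            = (D.decode ∘ₗ R) (sandwich D.U D.U X) := by
              show _ = ptraceRight M F (sandwich D.Uᴴ D.Uᴴ (R (sandwich D.U D.U X)))
              rw [sandwich_apply, Matrix.conjTranspose_conjTranspose]
              rfl
          _ = (sandwich P P ∘ₗ D.decode) (sandwich D.U D.U X) := by rw [hint]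
          _ = P * D.decode (sandwich D.U D.U X) * Pᴴ := rfl
      have hXval : D.decode (sandwich D.U D.U X) = ptraceRight M F X := by
        show ptraceRight M F (D.Uᴴ * (D.U * X * D.Uᴴ) * (D.Uᴴ)ᴴ) = _
        rw [Matrix.conjTranspose_conjTranspose]
        congr 1
        calc D.Uᴴ * (D.U * X * D.Uᴴ) * D.U
            = (D.Uᴴ * D.U) * X * (D.Uᴴ * D.U) := by simp only [Matrix.mul_assoc]
          _ = X := by rw [D.U_unitary_left, Matrix.one_mul, Matrix.mul_one]
      calc ptraceRight M F (S' X)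
          = ptraceRight M F ((Pᴴ ⊗ₖ (1 : Matrix F F ℂ))
              * (D.Uᴴ * R (D.U * X * D.Uᴴ) * D.U) * (Pᴴ ⊗ₖ (1 : Matrix F F ℂ))ᴴ) := by
            rw [hS'apply, hQH]
            congr 1
            rw [kron_conjTranspose, Matrix.conjTranspose_conjTranspose,
              Matrix.conjTranspose_one, ← hQdef]
        _ = Pᴴ * ptraceRight M F (D.Uᴴ * R (D.U * X * D.Uᴴ) * D.U) * (Pᴴ)ᴴ :=
            ptraceRight_kron_conj _
        _ = Pᴴ * (P * D.decode (sandwich D.U D.U X) * Pᴴ) * P := by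
            rw [hdec', Matrix.conjTranspose_conjTranspose]
        _ = (Pᴴ * P) * D.decode (sandwich D.U D.U X) * (Pᴴ * P) := by
            simp only [Matrix.mul_assoc]
        _ = ptraceRight M F X := by
            rw [hPl, Matrix.one_mul, Matrix.mul_one, hXval]
    obtain ⟨K, hK⟩ := exists_kraus S' hS'chan.1
    have hsum : ∑ x, (K x)ᴴ * K x = 1 :=
      krausMap_tp_sum K (fun X => by rw [← hK]; exact hS'chan.2 X)
    have hstruct : ∀ (g : F) (ρ : Matrix M M ℂ),
        ∑ p : ((M × F) × (M × F)) × F, (Matrix.of fun m n => K p.1 (m, p.2) (n, g)) * ρ *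
          (Matrix.of fun m n => K p.1 (m, p.2) (n, g))ᴴ = ρ :=
      fun g ρ => kraus_ptrace_structure K (fun X => by rw [← hK]; exact hS'pt X) g ρ
    have hscal : ∀ (g : F) (i : ((M × F) × (M × F)) × F) (m n m' : M),
        (Matrix.of fun m n => K i.1 (m, i.2) (n, g)) m n
          = if m = n then (Matrix.of fun m n => K i.1 (m, i.2) (n, g)) m' m' else 0 :=
      fun g => kraus_identity_scalar _ (hstruct g)
    set k : (M × F) × (M × F) → Matrix F F ℂ :=
      fun x => Matrix.of fun f g => K x (m0, f) (m0, g) with hkdef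
    have hKone : ∀ x, K x = (1 : Matrix M M ℂ) ⊗ₖ k x := by
      intro x
      ext ⟨m, f⟩ ⟨n, g⟩
      have := hscal g (x, f) m n m0
      simp only [Matrix.of_apply] at this
      rw [this]
      simp only [Matrix.kroneckerMap_apply, hkdef, Matrix.of_apply, Matrix.one_apply, ite_mul,
        one_mul, zero_mul]
    have hksum : ∑ x, (k x)ᴴ * k x = 1 := by
      ext f g
      have h1 := congrFun (congrFun hsum (m0, f)) (m0, g)
      rw [Matrix.sum_apply] at h1
      rw [Matrix.sum_apply]
      calc ∑ x, ((k x)ᴴ * k x) f g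
          = ∑ x, ((K x)ᴴ * K x) (m0, f) (m0, g) := by
            refine Finset.sum_congr rfl fun x _ => ?_
            rw [hKone x]
            simp only [Matrix.mul_apply, Matrix.conjTranspose_apply, Matrix.kroneckerMap_apply,
              Fintype.sum_prod_type, Matrix.one_apply, apply_ite (star : ℂ → ℂ), star_one,
              star_zero, ite_mul, zero_mul, mul_ite, mul_zero, Finset.sum_ite_irrel,
              Finset.sum_const_zero, Finset.sum_ite_eq, Finset.sum_ite_eq', Finset.mem_univ,
              if_true, one_mul, mul_one]
        _ = (1 : Matrix (M × F) (M × F) ℂ) (m0, f) (m0, g) := h1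
        _ = (1 : Matrix F F ℂ) f g := by
            simp [Matrix.one_apply, Prod.ext_iff]
    refine ⟨krausMap k, isChannel_krausMap k hksum, fun X => ?_⟩
    have hSX : D.Uᴴ * R (D.U * X * D.Uᴴ) * D.U = Q * (S' X) * Qᴴ := by
      rw [hS'apply]
      calc D.Uᴴ * R (D.U * X * D.Uᴴ) * D.U
          = (Q * Qᴴ) * (D.Uᴴ * R (D.U * X * D.Uᴴ) * D.U) * (Q * Qᴴ) := by
            rw [hQ2, Matrix.one_mul, Matrix.mul_one]
        _ = Q * (Qᴴ * (D.Uᴴ * R (D.U * X * D.Uᴴ) * D.U) * Q) * Qᴴ := by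
            simp only [Matrix.mul_assoc]
    rw [hSX, hK, krausMap_apply, tensorSuperop_sandwich_kraus P k, krausMap_apply,
      Finset.mul_sum, Finset.sum_mul]
    refine Finset.sum_congr rfl fun x _ => ?_
    have hQK : Q * ((1 : Matrix M M ℂ) ⊗ₖ k x) = P ⊗ₖ k x := by
      rw [hQdef, ← Matrix.mul_kronecker_mul, Matrix.mul_one, Matrix.one_mul]
    calc Q * (K x * X * (K x)ᴴ) * Qᴴ
        = (Q * K x) * X * (Q * K x)ᴴ := by
          rw [Matrix.conjTranspose_mul]
          simp only [Matrix.mul_assoc]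
      _ = (P ⊗ₖ k x) * X * (P ⊗ₖ k x)ᴴ := by rw [hKone x, hQK]

end Paper
end
end

section
/- For every natural number n, every real δ with 0 ≤ δ ≤ 1, and every natural number t with t ≥ 5nδ/(1+δ), one has ∑_{j=t+1}^{n} (n choose j) · δ^j ≤ exp(−nδ/3). -/
/-- Binomial tail bound: for `0 ≤ δ ≤ 1` and `t ≥ 5nδ/(1+δ)`,
`∑_{j=t+1}^{n} (n choose j) δ^j ≤ exp(−nδ/3)`. -/
theorem binomial_tail_bound (n : ℕ) (δ : ℝ) (hδ0 : 0 ≤ δ) (hδ1 : δ ≤ 1)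
    (t : ℕ) (ht : 5 * n * δ / (1 + δ) ≤ (t : ℝ)) :
    ∑ j ∈ Finset.Icc (t + 1) n, (n.choose j : ℝ) * δ ^ j ≤ Real.exp (-(n * δ) / 3) := by
  rcases le_or_gt n t with h | h
  · rw [Finset.Icc_eq_empty (by omega), Finset.sum_empty]
    exact (Real.exp_pos _).le
  · have h1δ : (0:ℝ) < 1 + δ := by linarith
    have hnpos : (0:ℝ) < n := by exact_mod_cast Nat.pos_of_ne_zero (by omega)
    have htn : (t:ℝ) + 1 ≤ n := by exact_mod_cast h
    have ht' : 5 * n * δ ≤ t * (1 + δ) := by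
      rw [div_le_iff₀ h1δ] at ht; linarith
    -- δ < 1/4
    have hδq : δ < 1/4 := by nlinarith
    -- t ≥ 4 n δ
    have ht4 : 4 * n * δ ≤ t := by nlinarith
    -- step 1: termwise bound
    have step1 : ∑ j ∈ Finset.Icc (t + 1) n, (n.choose j : ℝ) * δ ^ j ≤
        (1/2)^(t+1) * ∑ j ∈ Finset.Icc (t + 1) n, (n.choose j : ℝ) * (2*δ) ^ j := by
      rw [Finset.mul_sum]
      apply Finset.sum_le_sum
      intro j hj
      have hjt : t + 1 ≤ j := (Finset.mem_Icc.mp hj).1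
      have h2 : ((1:ℝ)/2)^j ≤ (1/2)^(t+1) :=
        pow_le_pow_of_le_one (by norm_num) (by norm_num) hjt
      have : δ ^ j = (1/2)^j * (2*δ)^j := by
        rw [← mul_pow]; ring_nf
      rw [this]
      have h2δ : (0:ℝ) ≤ (2*δ)^j := by positivity
      have := mul_le_mul_of_nonneg_right h2 h2δ
      calc (n.choose j : ℝ) * ((1/2)^j * (2*δ)^j)
          ≤ (n.choose j : ℝ) * ((1/2)^(t+1) * (2*δ)^j) := by
            apply mul_le_mul_of_nonneg_left this (by positivity)
        _ = (1/2)^(t+1) * ((n.choose j : ℝ) * (2*δ)^j) := by ring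
    -- step 2: extend sum to full binomial sum
    have step2 : ∑ j ∈ Finset.Icc (t + 1) n, (n.choose j : ℝ) * (2*δ) ^ j ≤ (1 + 2*δ)^n := by
      have hsub : Finset.Icc (t + 1) n ⊆ Finset.range (n + 1) := by
        intro j hj
        simp only [Finset.mem_Icc] at hj
        exact Finset.mem_range.mpr (by omega)
      have hfull : (1 + 2*δ)^n = ∑ j ∈ Finset.range (n + 1),
          (n.choose j : ℝ) * (2*δ) ^ j := by
        have := add_pow (2*δ) 1 n
        simp only [one_pow, mul_one] at this
        rw [add_comm (2*δ) 1] at this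
        rw [this]
        apply Finset.sum_congr rfl
        intro j _
        ring
      rw [hfull]
      apply Finset.sum_le_sum_of_subset_of_nonneg hsub
      intro j _ _
      positivity
    -- step 3: final exponential bound
    have step3 : ((1:ℝ)/2)^(t+1) * (1 + 2*δ)^n ≤ Real.exp (-(n * δ) / 3) := by
      have hhalf : ((1:ℝ)/2)^(t+1) = Real.exp (-((t:ℝ)+1) * Real.log 2) := by
        have : Real.exp (-((t:ℝ)+1) * Real.log 2) = Real.exp (-Real.log 2) ^ (t+1) := by
          rw [← Real.exp_nat_mul]
          congr 1
          push_cast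
          ring
        rw [this, Real.exp_neg, Real.exp_log (by norm_num : (0:ℝ) < 2)]
        norm_num
      have hpow : (1 + 2*δ)^n ≤ Real.exp (2 * n * δ) := by
        have h1 : 1 + 2*δ ≤ Real.exp (2*δ) := by
          have := Real.add_one_le_exp (2*δ)
          linarith
        calc (1 + 2*δ)^n ≤ (Real.exp (2*δ))^n :=
              pow_le_pow_left₀ (by linarith) h1 n
          _ = Real.exp (n * (2*δ)) := (Real.exp_nat_mul _ n).symm
          _ = Real.exp (2 * n * δ) := by ring_nf
      rw [hhalf]
      calc Real.exp (-((t:ℝ)+1) * Real.log 2) * (1 + 2*δ)^n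
          ≤ Real.exp (-((t:ℝ)+1) * Real.log 2) * Real.exp (2 * n * δ) := by
            apply mul_le_mul_of_nonneg_left hpow (Real.exp_pos _).le
        _ = Real.exp (-((t:ℝ)+1) * Real.log 2 + 2 * n * δ) := (Real.exp_add _ _).symm
        _ ≤ Real.exp (-(n * δ) / 3) := by
            apply Real.exp_le_exp.mpr
            have hlog2 : (0.6931471803 : ℝ) < Real.log 2 := Real.log_two_gt_d9
            have hnδ : (0:ℝ) ≤ n * δ := by positivity
            have hl0 : (0:ℝ) ≤ Real.log 2 := by linarith
            have h1 : 4 * n * δ * Real.log 2 ≤ t * Real.log 2 :=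
              mul_le_mul_of_nonneg_right ht4 hl0
            have h2 : 4 * n * δ * (0.6931471803:ℝ) ≤ 4 * n * δ * Real.log 2 :=
              mul_le_mul_of_nonneg_left hlog2.le (by positivity)
            nlinarith
    calc ∑ j ∈ Finset.Icc (t + 1) n, (n.choose j : ℝ) * δ ^ j
        ≤ (1/2)^(t+1) * ∑ j ∈ Finset.Icc (t + 1) n, (n.choose j : ℝ) * (2*δ) ^ j := step1
      _ ≤ (1/2)^(t+1) * (1 + 2*δ)^n := by
          apply mul_le_mul_of_nonneg_left step2 (by positivity)
      _ ≤ Real.exp (-(n * δ) / 3) := step3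
end

section
/- For every natural number n and every real δ ≥ 0 with n·δ ≤ 1, one has ∑_{j=2}^{n} (n choose j) · δ^j ≤ e · (n choose 2) · δ², where e is Euler's constant. -/
lemma descFactorial_le_aux (n m : ℕ) :
    n.descFactorial (m + 2) ≤ n.descFactorial 2 * n ^ m := by
  induction m with
  | zero => simp
  | succ k ih =>
    rw [Nat.descFactorial_succ, pow_succ]
    calc (n - (k + 2)) * n.descFactorial (k + 2)
        ≤ n * (n.descFactorial 2 * n ^ k) := Nat.mul_le_mul (Nat.sub_le _ _) ih
      _ = n.descFactorial 2 * (n ^ k * n) := by ring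

/-- Level-one bound on the weight of bad fault paths: for `0 ≤ δ` with `nδ ≤ 1`,
`∑_{j=2}^{n} (n choose j) δ^j ≤ e · (n choose 2) · δ²`. -/
theorem bad_fault_path_level_one_bound (n : ℕ) (δ : ℝ) (hδ0 : 0 ≤ δ)
    (h : (n : ℝ) * δ ≤ 1) :
    ∑ j ∈ Finset.Icc 2 n, (n.choose j : ℝ) * δ ^ j
      ≤ Real.exp 1 * (n.choose 2 : ℝ) * δ ^ 2 := by
  have hnδ0 : 0 ≤ (n : ℝ) * δ := mul_nonneg (Nat.cast_nonneg n) hδ0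
  set D : ℝ := (n.descFactorial 2 : ℝ) with hD
  have hD0 : 0 ≤ D := Nat.cast_nonneg _
  have hDchoose : D = 2 * (n.choose 2 : ℝ) := by
    rw [hD, Nat.descFactorial_eq_factorial_mul_choose]
    push_cast [Nat.factorial]
    ring
  -- termwise bound
  have key : ∀ j ∈ Finset.Icc 2 n,
      (n.choose j : ℝ) * δ ^ j ≤ D * δ ^ 2 * (1 / (Nat.factorial j : ℝ)) := by
    intro j hj
    simp only [Finset.mem_Icc] at hj
    obtain ⟨m, rfl⟩ : ∃ m, j = m + 2 := ⟨j - 2, by omega⟩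
    have hfac : (0 : ℝ) < (Nat.factorial (m + 2) : ℝ) := by
      exact_mod_cast Nat.factorial_pos _
    have hchoose : (n.choose (m + 2) : ℝ)
        = (n.descFactorial (m + 2) : ℝ) / (Nat.factorial (m + 2) : ℝ) := by
      rw [Nat.descFactorial_eq_factorial_mul_choose]
      push_cast
      field_simp
    rw [hchoose]
    rw [div_mul_eq_mul_div, mul_one_div, div_le_div_iff_of_pos_right hfac]
    have h1 : (n.descFactorial (m + 2) : ℝ) ≤ D * (n : ℝ) ^ m := by
      rw [hD]
      exact_mod_cast descFactorial_le_aux n m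
    calc (n.descFactorial (m + 2) : ℝ) * δ ^ (m + 2)
        ≤ D * (n : ℝ) ^ m * δ ^ (m + 2) :=
          mul_le_mul_of_nonneg_right h1 (pow_nonneg hδ0 _)
      _ = D * δ ^ 2 * ((n : ℝ) * δ) ^ m := by ring
      _ ≤ D * δ ^ 2 * 1 := by
          apply mul_le_mul_of_nonneg_left _ (mul_nonneg hD0 (pow_nonneg hδ0 2))
          exact pow_le_one₀ hnδ0 h
      _ = D * δ ^ 2 := by ring
  have hsum1 : ∑ j ∈ Finset.Icc 2 n, (n.choose j : ℝ) * δ ^ j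
      ≤ ∑ j ∈ Finset.Icc 2 n, D * δ ^ 2 * (1 / (Nat.factorial j : ℝ)) :=
    Finset.sum_le_sum key
  -- bound the factorial sum by e - 2
  have hfacsum : ∑ j ∈ Finset.Icc 2 n, (1 / (Nat.factorial j : ℝ)) ≤ Real.exp 1 - 2 := by
    have hmono : ∑ j ∈ Finset.Icc 2 n, (1 / (Nat.factorial j : ℝ))
        ≤ ∑ j ∈ Finset.Icc 2 (n + 2), (1 / (Nat.factorial j : ℝ)) := by
      apply Finset.sum_le_sum_of_subset_of_nonneg
      · exact Finset.Icc_subset_Icc_right (by omega)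
      · intro i _ _
        positivity
    have hexp : ∑ j ∈ Finset.range (n + 3), (1 : ℝ) ^ j / (Nat.factorial j : ℝ)
        ≤ Real.exp 1 := Real.sum_le_exp_of_nonneg zero_le_one _
    have hsplit : ∑ j ∈ Finset.range (n + 3), (1 : ℝ) ^ j / (Nat.factorial j : ℝ)
        = 2 + ∑ j ∈ Finset.Icc 2 (n + 2), (1 / (Nat.factorial j : ℝ)) := by
      rw [Finset.range_eq_Ico, ← Finset.sum_Ico_consecutive _ (by omega : 0 ≤ 2) (by omega : 2 ≤ n + 3)]
      have : Finset.Icc 2 (n + 2) = Finset.Ico 2 (n + 3) := by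
        rw [← Finset.Ico_add_one_right_eq_Icc]; rfl
      rw [this]
      norm_num [Finset.sum_Ico_eq_sum_range, Finset.sum_range_succ, Nat.factorial]
    linarith
  have he : Real.exp 1 < 2.7182818286 := Real.exp_one_lt_d9
  have hC0 : (0 : ℝ) ≤ (n.choose 2 : ℝ) * δ ^ 2 :=
    mul_nonneg (Nat.cast_nonneg _) (pow_nonneg hδ0 2)
  calc ∑ j ∈ Finset.Icc 2 n, (n.choose j : ℝ) * δ ^ j
      ≤ D * δ ^ 2 * ∑ j ∈ Finset.Icc 2 n, (1 / (Nat.factorial j : ℝ)) := by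
        rw [Finset.mul_sum]; exact hsum1
    _ ≤ D * δ ^ 2 * (Real.exp 1 - 2) := by
        apply mul_le_mul_of_nonneg_left hfacsum (mul_nonneg hD0 (pow_nonneg hδ0 2))
    _ = (n.choose 2 : ℝ) * δ ^ 2 * (2 * (Real.exp 1 - 2)) := by rw [hDchoose]; ring
    _ ≤ (n.choose 2 : ℝ) * δ ^ 2 * Real.exp 1 := by
        apply mul_le_mul_of_nonneg_left _ hC0
        linarith
    _ = Real.exp 1 * (n.choose 2 : ℝ) * δ ^ 2 := by ring
end

section
/- Let N ≥ 2 be an integer, set c := e · (N choose 2) where e is Euler's constant, and let x be a real number with 0 ≤ x ≤ 1. Let (a_r)_{r ≥ 1} be a sequence of nonnegative real numbers such that a₁ ≤ x²/c and, for every r ≥ 2, a_r ≤ ∑_{j=2}^{N} (N choose j) · (a_{r−1})^j. Then a_r ≤ x^{2^r}/c for every r ≥ 1. -/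
/-- Combinatorial bound: `C(N,j)·(j-2)! ≤ C(N,2)·N^(j-2)` for `j ≥ 2`. -/
lemma choose_mul_factorial_le (N : ℕ) : ∀ j, 2 ≤ j →
    N.choose j * Nat.factorial (j - 2) ≤ N.choose 2 * N ^ (j - 2) := by
  intro j hj
  induction j, hj using Nat.le_induction with
  | base => simp
  | succ j hj ih =>
    have h1 : N.choose (j + 1) * (j + 1) = N.choose j * (N - j) :=
      Nat.choose_succ_right_eq N j
    have hj2 : j + 1 - 2 = (j - 2) + 1 := by omega
    rw [hj2, Nat.factorial_succ, pow_succ]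
    have key : N.choose (j + 1) * ((j - 2 + 1) * Nat.factorial (j - 2))
        ≤ N.choose j * N * Nat.factorial (j - 2) := by
      calc N.choose (j + 1) * ((j - 2 + 1) * Nat.factorial (j - 2))
          = N.choose (j + 1) * (j - 2 + 1) * Nat.factorial (j - 2) := by ring
        _ ≤ N.choose (j + 1) * (j + 1) * Nat.factorial (j - 2) := by
            have : j - 2 + 1 ≤ j + 1 := by omega
            exact Nat.mul_le_mul_right _ (Nat.mul_le_mul_left _ this)
        _ = N.choose j * (N - j) * Nat.factorial (j - 2) := by rw [h1]
        _ ≤ N.choose j * N * Nat.factorial (j - 2) := by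
            exact Nat.mul_le_mul_right _ (Nat.mul_le_mul_left _ (Nat.sub_le _ _))
    calc N.choose (j + 1) * ((j - 2 + 1) * Nat.factorial (j - 2))
        ≤ N.choose j * N * Nat.factorial (j - 2) := key
      _ = (N.choose j * Nat.factorial (j - 2)) * N := by ring
      _ ≤ (N.choose 2 * N ^ (j - 2)) * N := Nat.mul_le_mul_right _ ih
      _ = N.choose 2 * (N ^ (j - 2) * N) := by ring

/-- The doubly-exponential error-suppression recursion: if `a₁ ≤ x²/c` and
`a_r ≤ ∑_{j=2}^{N} (N choose j) a_{r−1}^j` for `r ≥ 2`, where `c = e·(N choose 2)`,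
then `a_r ≤ x^(2^r)/c` for all `r ≥ 1`. -/
theorem error_suppression_recursion (N : ℕ) (hN : 2 ≤ N) (x : ℝ)
    (hx0 : 0 ≤ x) (hx1 : x ≤ 1) (a : ℕ → ℝ)
    (ha_nonneg : ∀ r, 1 ≤ r → 0 ≤ a r)
    (ha1 : a 1 ≤ x ^ 2 / (Real.exp 1 * (N.choose 2 : ℝ)))
    (harec : ∀ r, 2 ≤ r → a r ≤ ∑ j ∈ Finset.Icc 2 N, (N.choose j : ℝ) * a (r - 1) ^ j) :
    ∀ r, 1 ≤ r → a r ≤ x ^ (2 ^ r) / (Real.exp 1 * (N.choose 2 : ℝ)) := by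
  set c : ℝ := Real.exp 1 * (N.choose 2 : ℝ) with hc_def
  have hC2 : (1 : ℝ) ≤ (N.choose 2 : ℝ) := by
    have h := Nat.choose_pos hN
    have : 1 ≤ N.choose 2 := h
    exact_mod_cast this
  have he1 : (2 : ℝ) ≤ Real.exp 1 := by
    have := Real.add_one_le_exp (1 : ℝ); linarith
  have hc1 : (1 : ℝ) ≤ c := by
    have := mul_le_mul he1 hC2 zero_le_one (by positivity)
    simpa [hc_def] using le_trans (by norm_num) this
  have hcpos : (0 : ℝ) < c := lt_of_lt_of_le one_pos hc1
  -- N ≤ c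
  have hNc : (N : ℝ) ≤ c := by
    have hchoose : (N : ℝ) ≤ 2 * (N.choose 2 : ℝ) := by
      have : N ≤ 2 * N.choose 2 := by
        have heq : N.choose 2 = N * (N - 1) / 2 := Nat.choose_two_right N
        have hev : Even (N * (N - 1)) := by
          rcases Nat.even_or_odd N with h | h
          · exact h.mul_right _
          · have : Even (N - 1) := by
              rcases h with ⟨k, hk⟩; exact ⟨k, by omega⟩
            exact this.mul_left _
        have hdvd : 2 ∣ N * (N - 1) := hev.two_dvd
        have h2 : 2 * (N * (N - 1) / 2) = N * (N - 1) := Nat.mul_div_cancel' hdvd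
        have hNN : N ≤ N * (N - 1) := Nat.le_mul_of_pos_right N (by omega)
        omega
      exact_mod_cast this
    calc (N : ℝ) ≤ 2 * (N.choose 2 : ℝ) := hchoose
      _ ≤ Real.exp 1 * (N.choose 2 : ℝ) :=
          mul_le_mul_of_nonneg_right he1 (by linarith)
      _ = c := rfl
  -- key bound: for 0 ≤ t ≤ 1/c, ∑ C(N,j) t^j ≤ c t²
  have key : ∀ t : ℝ, 0 ≤ t → t ≤ 1 / c →
      (∑ j ∈ Finset.Icc 2 N, (N.choose j : ℝ) * t ^ j) ≤ c * t ^ 2 := by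
    intro t ht0 htc
    have step1 : (∑ j ∈ Finset.Icc 2 N, (N.choose j : ℝ) * t ^ j)
        ≤ ∑ j ∈ Finset.Icc 2 N, ((N.choose 2 : ℝ) / Nat.factorial (j - 2)) * t ^ 2 := by
      apply Finset.sum_le_sum
      intro j hj
      obtain ⟨hj2, hjN⟩ := Finset.mem_Icc.mp hj
      have hfacpos : (0 : ℝ) < Nat.factorial (j - 2) := by positivity
      have hsplit : t ^ j = t ^ (j - 2) * t ^ 2 := by
        rw [← pow_add]; congr 1; omega
      rw [hsplit, ← mul_assoc]
      apply mul_le_mul_of_nonneg_right _ (by positivity)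
      -- C(N,j) * t^(j-2) ≤ C2 / (j-2)!
      have hnat := choose_mul_factorial_le N j hj2
      have hreal : (N.choose j : ℝ) ≤ (N.choose 2 : ℝ) * (N : ℝ) ^ (j - 2)
          / Nat.factorial (j - 2) := by
        rw [le_div_iff₀ hfacpos]
        exact_mod_cast hnat
      have htpow : t ^ (j - 2) ≤ (1 / c) ^ (j - 2) := pow_le_pow_left₀ ht0 htc _
      calc (N.choose j : ℝ) * t ^ (j - 2)
          ≤ ((N.choose 2 : ℝ) * (N : ℝ) ^ (j - 2) / Nat.factorial (j - 2)) * (1 / c) ^ (j - 2) := by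
            apply mul_le_mul hreal htpow (by positivity) (by positivity)
        _ = (N.choose 2 : ℝ) / Nat.factorial (j - 2) * ((N : ℝ) / c) ^ (j - 2) := by
            rw [div_pow, one_pow, div_pow]
            field_simp
        _ ≤ (N.choose 2 : ℝ) / Nat.factorial (j - 2) * 1 := by
            apply mul_le_mul_of_nonneg_left _ (by positivity)
            apply pow_le_one₀ (by positivity)
            rw [div_le_one hcpos]; exact hNc
        _ = (N.choose 2 : ℝ) / Nat.factorial (j - 2) := mul_one _
    have step2 : (∑ j ∈ Finset.Icc 2 N, ((N.choose 2 : ℝ) / Nat.factorial (j - 2)))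
        ≤ (N.choose 2 : ℝ) * Real.exp 1 := by
      have hre : (∑ j ∈ Finset.Icc 2 N, ((N.choose 2 : ℝ) / Nat.factorial (j - 2)))
          = (N.choose 2 : ℝ) * ∑ i ∈ Finset.range (N - 1), (1 : ℝ) / Nat.factorial i := by
        rw [Finset.mul_sum]
        rw [show Finset.Icc 2 N = Finset.map ⟨fun i => i + 2, fun a b h => by simpa using h⟩
          (Finset.range (N - 1)) from ?_]
        · rw [Finset.sum_map]
          apply Finset.sum_congr rfl
          intro i _
          simp only [Function.Embedding.coeFn_mk, Nat.add_sub_cancel, mul_one_div]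
          rfl
        · ext k
          simp only [Finset.mem_Icc, Finset.mem_map, Finset.mem_range,
            Function.Embedding.coeFn_mk]
          dsimp only [DFunLike.coe, Function.instFunLikeEmbedding]
          constructor
          · rintro ⟨h1, h2⟩; exact ⟨k - 2, by omega, by omega⟩
          · rintro ⟨i, hi, rfl⟩; omega
      rw [hre]
      have hsum : (∑ i ∈ Finset.range (N - 1), (1 : ℝ) / Nat.factorial i) ≤ Real.exp 1 := by
        have := Real.sum_le_exp_of_nonneg (x := 1) zero_le_one (N - 1)
        simpa using this
      exact mul_le_mul_of_nonneg_left hsum (by positivity)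
    calc (∑ j ∈ Finset.Icc 2 N, (N.choose j : ℝ) * t ^ j)
        ≤ ∑ j ∈ Finset.Icc 2 N, ((N.choose 2 : ℝ) / Nat.factorial (j - 2)) * t ^ 2 := step1
      _ = (∑ j ∈ Finset.Icc 2 N, ((N.choose 2 : ℝ) / Nat.factorial (j - 2))) * t ^ 2 := by
          rw [Finset.sum_mul]
      _ ≤ ((N.choose 2 : ℝ) * Real.exp 1) * t ^ 2 :=
          mul_le_mul_of_nonneg_right step2 (by positivity)
      _ = c * t ^ 2 := by rw [hc_def]; ring
  -- main induction
  intro r hr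
  induction r, hr using Nat.le_induction with
  | base => simpa using ha1
  | succ r hr ih =>
    have hrsub : r + 1 - 1 = r := by omega
    have har : a r ≤ x ^ (2 ^ r) / c := ih
    have harn : 0 ≤ a r := ha_nonneg r hr
    have hxp : x ^ (2 ^ r) ≤ 1 := pow_le_one₀ hx0 hx1
    have htc : a r ≤ 1 / c := le_trans har ((div_le_div_iff_of_pos_right hcpos).mpr hxp)
    have h1 := harec (r + 1) (by omega)
    rw [hrsub] at h1
    have h2 : a (r + 1) ≤ c * (a r) ^ 2 := le_trans h1 (key (a r) harn htc)
    have h3 : c * (a r) ^ 2 ≤ c * (x ^ (2 ^ r) / c) ^ 2 :=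
      mul_le_mul_of_nonneg_left (pow_le_pow_left₀ harn har 2) (le_of_lt hcpos)
    have hxeq : x ^ (2 ^ (r + 1)) = (x ^ (2 ^ r)) ^ 2 := by
      rw [pow_succ, pow_mul]
    have h4 : c * (x ^ (2 ^ r) / c) ^ 2 = x ^ (2 ^ (r + 1)) / c := by
      rw [hxeq]; field_simp
    linarith
end
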